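/- Let H be a real Hilbert space, a symmetric bounded coercive bilinear form a with coercivity constant c > 0, V_f a closed subspace of H, P : H → H a bounded linear map with ker-condition V_f = {v : Pv = 0}, and F(v) = ⟨f, v⟩ for some f ∈ H. Let u solve a(u,v) = ⟨f,v⟩ on H and u_ms be its Galerkin projection onto the a-orthogonal complement of V_f, so that e := u − u_ms ∈ V_f. Suppose P is an orthogonal projection and there is a constant C_a > 0 with ‖v − Pv‖ ≤ C_a · a(v,v)^{1/2} for all v ∈ H. Then a(e,e)^{1/2} ≤ C_a ‖f − Pf‖. -/
import Mathlib


open RealInnerProductSpace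

/-- Abstract version of the idealized error bound (Theorem thm:umshH):
`a(e,e)^{1/2} ≤ C_a ‖f − Pf‖` for the ideal multiscale error `e = u − u_ms ∈ V_f`. -/
theorem ideal_multiscale_error_bound
    {H : Type*} [NormedAddCommGroup H] [InnerProductSpace ℝ H] [CompleteSpace H]
    (a : H →ₗ[ℝ] H →ₗ[ℝ] ℝ)
    (hsym : ∀ u v : H, a u v = a v u)
    (c β : ℝ) (hc : 0 < c)
    (hcoer : ∀ v : H, c * ‖v‖ ^ 2 ≤ a v v)
    (hbdd : ∀ u v : H, |a u v| ≤ β * ‖u‖ * ‖v‖)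
    (Vf : Submodule ℝ H) (hVf : IsClosed (Vf : Set H))
    (P : H →L[ℝ] H)
    (hker : ∀ v : H, v ∈ Vf ↔ P v = 0)
    (hidem : ∀ v : H, P (P v) = P v)
    (hsa : ∀ u v : H, ⟪P u, v⟫ = ⟪u, P v⟫)
    (Ca : ℝ) (hCa : 0 < Ca)
    (happrox : ∀ v : H, ‖v - P v‖ ≤ Ca * Real.sqrt (a v v))
    (f : H)
    (u : H) (hu : ∀ v : H, a u v = ⟪f, v⟫)
    (ums : H)
    (hms : ∀ w ∈ Vf, a ums w = 0)
    (he : u - ums ∈ Vf) :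
    Real.sqrt (a (u - ums) (u - ums)) ≤ Ca * ‖f - P f‖ := by
  set e := u - ums with hedef
  have hPe : P e = 0 := (hker e).mp he
  have haee_nonneg : 0 ≤ a e e := le_trans (by positivity) (hcoer e)
  -- a e e = ⟪f - P f, e⟫
  have h1 : a e e = ⟪f, e⟫ := by
    have : a e e = a u e - a ums e := by
      have : a e e = a u e - a ums e := by
        simp only [hedef, map_sub, LinearMap.sub_apply]
        rw [hsym ums u]
      exact this
    rw [this, hms e he, hu e, sub_zero]
  have h2 : (⟪f, e⟫ : ℝ) = ⟪f - P f, e⟫ := by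
    rw [inner_sub_left]
    have : (⟪P f, e⟫ : ℝ) = 0 := by rw [hsa, hPe, inner_zero_right]
    rw [this, sub_zero]
  have h3 : a e e ≤ ‖f - P f‖ * (Ca * Real.sqrt (a e e)) := by
    calc a e e = ⟪f - P f, e⟫ := by rw [h1, h2]
    _ ≤ ‖f - P f‖ * ‖e‖ := real_inner_le_norm _ _
    _ = ‖f - P f‖ * ‖e - P e‖ := by rw [hPe, sub_zero]
    _ ≤ ‖f - P f‖ * (Ca * Real.sqrt (a e e)) :=
        mul_le_mul_of_nonneg_left (happrox e) (norm_nonneg _)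
  have hs : Real.sqrt (a e e) * Real.sqrt (a e e) = a e e :=
    Real.mul_self_sqrt haee_nonneg
  rcases eq_or_lt_of_le (Real.sqrt_nonneg (a e e)) with h0 | h0
  · rw [← h0]; positivity
  · have h4 : Real.sqrt (a e e) * Real.sqrt (a e e) ≤ (Ca * ‖f - P f‖) * Real.sqrt (a e e) := by
      rw [hs]; nlinarith [h3]
    exact le_of_mul_le_mul_right h4 h0
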